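/- Let δ > 0, λ ∈ ℝ, and x : [-δ, T] → ℝ^n continuous with x(s) = 0 for all s ∈ [-δ, 0]. Define z(t) = ∫_{-δ}^{0} e^{λθ} x(t+θ) dθ. Then for every t ∈ [0, T], z(t) = ∫_0^t [x(s) - e^{-λδ} x(s-δ) 1_{(δ,∞)}(s) - λ z(s)] ds, i.e., z solves the corresponding Volterra integral equation with zero initial condition. -/

import Mathlib

open MeasureTheory intervalIntegral Set

/-- If `x` is continuous on `[-δ, T]` and vanishes on `[-δ, 0]`, then the distributed
delay term `z(t) = ∫_{-δ}^0 e^{λθ} x(t+θ) dθ` solves the delay-free Volterra integral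
equation `z(t) = ∫_0^t [x(s) - e^{-λδ} x(s-δ) 1_{(δ,∞)}(s) - λ z(s)] ds` on `[0, T]`. -/
theorem stmt1 {n : ℕ} (δ lam T : ℝ) (hδ : 0 < δ) (hT : 0 < T)
    (x : ℝ → EuclideanSpace ℝ (Fin n)) (hx : ContinuousOn x (Set.Icc (-δ) T))
    (hx0 : ∀ s ∈ Set.Icc (-δ) (0 : ℝ), x s = 0)
    (z : ℝ → EuclideanSpace ℝ (Fin n))
    (hz : ∀ t, z t = ∫ θ in (-δ)..0, Real.exp (lam * θ) • x (t + θ)) :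
    ∀ t ∈ Set.Icc (0 : ℝ) T,
      z t = ∫ s in (0 : ℝ)..t,
        (x s - (if δ < s then Real.exp (-(lam * δ)) • x (s - δ) else 0) - lam • z s) := by
  intro t ht
  obtain ⟨ht0, htT⟩ := ht
  -- Extend `x` to a globally continuous `y` vanishing on `(-∞, 0]`.
  set c : ℝ → ℝ := fun s => max (min s T) (-δ) with hcdef
  have hcc : Continuous c := (continuous_id.min continuous_const).max continuous_const
  have hmaps : ∀ s, c s ∈ Icc (-δ) T := fun s =>
    ⟨le_max_right _ _, max_le (min_le_right _ _) (by linarith)⟩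
  set y : ℝ → EuclideanSpace ℝ (Fin n) := fun s => x (c s) with hydef
  have hyc : Continuous y := hx.comp_continuous hcc hmaps
  have hyx : ∀ s ∈ Icc (-δ) T, y s = x s := by
    intro s hs
    simp only [hydef, hcdef]
    rw [min_eq_left hs.2, max_eq_left hs.1]
  have hy0 : ∀ s ≤ (0:ℝ), y s = 0 := by
    intro s hs
    simp only [hydef, hcdef]
    rw [min_eq_left (hs.trans hT.le)]
    exact hx0 _ ⟨le_max_right _ _, max_le hs (by linarith)⟩
  -- The antiderivative `G` and the function `w` equal to `z` on `[0, T]`.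
  have hic : Continuous fun u => Real.exp (lam * u) • y u :=
    (Real.continuous_exp.comp (continuous_const.mul continuous_id)).smul hyc
  set G : ℝ → EuclideanSpace ℝ (Fin n) := fun r => ∫ u in (0:ℝ)..r, Real.exp (lam * u) • y u
    with hGdef
  have hG : ∀ r, HasDerivAt G (Real.exp (lam * r) • y r) r := fun r =>
    intervalIntegral.integral_hasDerivAt_right (hic.intervalIntegrable _ _)
      (hic.stronglyMeasurableAtFilter _ _) hic.continuousAt
  have hGdiff : Differentiable ℝ G := fun r => (hG r).differentiableAt
  have hGc : Continuous G := hGdiff.continuous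
  set w : ℝ → EuclideanSpace ℝ (Fin n) := fun r => Real.exp (-(lam * r)) • (G r - G (r - δ))
    with hwdef
  have hwc : Continuous w :=
    (Real.continuous_exp.comp (continuous_const.mul continuous_id).neg).smul
      (hGc.sub (hGc.comp (continuous_id.sub continuous_const)))
  -- `z = w` on `[0, T]` (change of variables).
  have key : ∀ r : ℝ, (∫ θ in (-δ)..0, Real.exp (lam * θ) • y (r + θ)) = w r := by
    intro r
    have h1 : (∫ θ in (-δ)..0, Real.exp (lam * θ) • y (r + θ))
        = ∫ u in (-δ + r)..(0 + r), Real.exp (lam * (u - r)) • y u := by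
      rw [← intervalIntegral.integral_comp_add_right (fun u => Real.exp (lam * (u - r)) • y u) r]
      apply intervalIntegral.integral_congr
      intro θ _
      simp only
      congr 1
      · congr 1; ring
      · rw [add_comm]
    have h2 : (∫ u in (-δ + r)..(0 + r), Real.exp (lam * (u - r)) • y u)
        = Real.exp (-(lam * r)) • ∫ u in (r - δ)..r, Real.exp (lam * u) • y u := by
      rw [← intervalIntegral.integral_smul, (by ring : -δ + r = r - δ), (by ring : (0:ℝ) + r = r)]
      apply intervalIntegral.integral_congr
      intro u _
      simp only
      rw [smul_smul, ← Real.exp_add]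
      congr 2
      ring
    have h3 : (∫ u in (r - δ)..r, Real.exp (lam * u) • y u) = G r - G (r - δ) :=
      (intervalIntegral.integral_interval_sub_left (hic.intervalIntegrable _ _)
        (hic.intervalIntegrable _ _)).symm
    rw [h1, h2, h3, hwdef]
  have hzw : ∀ r ∈ Icc (0:ℝ) T, z r = w r := by
    intro r hr
    rw [hz r, ← key r]
    apply intervalIntegral.integral_congr
    intro θ hθ
    rw [uIcc_of_le (by linarith : -δ ≤ (0:ℝ))] at hθ
    simp only
    rw [hyx _ ⟨by linarith [hθ.1, hr.1], by linarith [hθ.2, hr.2]⟩]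
  -- The Volterra integrand.
  set h : ℝ → EuclideanSpace ℝ (Fin n) :=
    fun s => y s - Real.exp (-(lam * δ)) • y (s - δ) - lam • w s with hhdef
  have hyδ : Continuous fun s => y (s - δ) := hyc.comp (continuous_sub_right δ)
  have hhc : Continuous h :=
    ((hyc.sub (hyδ.const_smul (Real.exp (-(lam * δ))))).sub
      (hwc.const_smul lam))
  -- `w` has derivative `h`.
  have hw : ∀ r, HasDerivAt w (h r) r := by
    intro r
    have h1 : HasDerivAt (fun r : ℝ => Real.exp (-(lam * r))) (-lam * Real.exp (-(lam * r))) r := by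
      have hlin : HasDerivAt (fun r : ℝ => -(lam * r)) (-lam) r := by
        simpa [Pi.neg_def] using ((hasDerivAt_id r).const_mul lam).neg
      simpa [mul_comm] using hlin.exp
    have hinner : HasDerivAt (fun s : ℝ => s - δ) 1 r := (hasDerivAt_id r).sub_const δ
    have h3 : HasDerivAt (fun r : ℝ => G (r - δ)) (Real.exp (lam * (r - δ)) • y (r - δ)) r := by
      simpa [Function.comp_def] using HasDerivAt.scomp r (hG (r - δ)) hinner
    have h2 := (hG r).sub h3
    rw [hwdef, hhdef]
    have := h1.smul h2
    refine this.congr_deriv ?_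
    have e1 : Real.exp (-(lam * r)) * Real.exp (lam * r) = 1 := by
      rw [← Real.exp_add, neg_add_cancel, Real.exp_zero]
    have e2 : Real.exp (-(lam * r)) * Real.exp (lam * (r - δ)) = Real.exp (-(lam * δ)) := by
      rw [← Real.exp_add]; congr 1; ring
    simp only [hwdef, smul_sub, smul_smul, e1, e2, one_smul, neg_mul, neg_smul, ← sub_eq_add_neg, Pi.sub_apply]
    abel
  -- initial condition
  have hw0 : w 0 = 0 := by
    have hGneg : G (0 - δ) = 0 := by
      simp only [hGdef]
      rw [intervalIntegral.integral_congr (g := fun _ => (0:EuclideanSpace ℝ (Fin n)))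
        (fun u hu => by
          rw [uIcc_of_ge (by linarith : (0:ℝ) - δ ≤ 0)] at hu
          simp only
          rw [hy0 u hu.2, smul_zero]), intervalIntegral.integral_zero]
    simp only [hwdef]
    rw [hGneg, hGdef]
    simp
  -- `w` solves the Volterra equation.
  have hwint : ∀ r, w r = ∫ s in (0:ℝ)..r, h s := by
    have hD : ∀ r, HasDerivAt (fun r => w r - ∫ s in (0:ℝ)..r, h s) 0 r := by
      intro r
      have hFTC : HasDerivAt (fun r => ∫ s in (0:ℝ)..r, h s) (h r) r :=
        intervalIntegral.integral_hasDerivAt_right (hhc.intervalIntegrable _ _)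
          (hhc.stronglyMeasurableAtFilter _ _) hhc.continuousAt
      simpa [Pi.sub_def] using (hw r).sub hFTC
    intro r
    have hcst := is_const_of_deriv_eq_zero (fun r => (hD r).differentiableAt)
      (fun r => (hD r).deriv) r 0
    simp only [intervalIntegral.integral_same, sub_zero, hw0] at hcst
    exact sub_eq_zero.mp hcst
  -- Conclude.
  rw [hzw t ⟨ht0, htT⟩, hwint t]
  apply intervalIntegral.integral_congr
  intro s hs
  rw [uIcc_of_le ht0] at hs
  simp only [hhdef]
  rw [hyx s ⟨by linarith [hs.1], hs.2.trans htT⟩, hzw s ⟨hs.1, hs.2.trans htT⟩]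
  by_cases hsδ : δ < s
  · rw [if_pos hsδ, hyx (s - δ) ⟨by linarith, by linarith [hs.2]⟩]
  · rw [if_neg hsδ, hy0 (s - δ) (by push_neg at hsδ; linarith), smul_zero]
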